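/- Let I be a matroidal ideal of degree d in R = K[x_1,...,x_n] with supp(I) = {x_1,...,x_n} and gcd(I)=1, and suppose m ∉ Ass^∞(I). Let Γ_1,...,Γ_s be the connected components of the linear relation graph Γ_I. Then I ⊆ I_1 ∩ ... ∩ I_s, where I_j is the square-free Veronese-type ideal of degree d_j generated by all square-free monomials of degree d_j in the variables indexed by V(Γ_j), and d = d_1 + ... + d_s. -/

import Mathlib

open MvPolynomial

/-- The square-free monomial `∏_{i ∈ S} x_i`. -/
noncomputable def sqMon (K : Type*) [Field K] {n : ℕ} (S : Finset (Fin n)) :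
    MvPolynomial (Fin n) K := ∏ i ∈ S, X i

/-- The square-free monomial ideal generated by the monomials with supports in `B`. -/
noncomputable def matIdeal (K : Type*) [Field K] {n : ℕ} (B : Finset (Finset (Fin n))) :
    Ideal (MvPolynomial (Fin n) K) := Ideal.span (sqMon K '' ↑B)

/-- `B` is the set of bases (supports of the minimal generators) of a matroidal ideal of
degree `d`: all members have cardinality `d` and the matroid basis-exchange property holds
(this is the square-free case of the polymatroidal exchange property). -/
def IsMatroidalBases {n : ℕ} (d : ℕ) (B : Finset (Finset (Fin n))) : Prop :=
  B.Nonempty ∧ (∀ S ∈ B, S.card = d) ∧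
    ∀ S ∈ B, ∀ T ∈ B, ∀ i ∈ S, i ∉ T → ∃ j ∈ T, j ∉ S ∧ insert j (S.erase i) ∈ B

/-- The graded maximal ideal `(x_1, …, x_n)`. -/
noncomputable def maxIdeal (K : Type*) [Field K] (n : ℕ) : Ideal (MvPolynomial (Fin n) K) :=
  Ideal.span (Set.range X)

/-- `Ass(R/I^t)`. -/
noncomputable def AssPow (K : Type*) [Field K] {n : ℕ} (I : Ideal (MvPolynomial (Fin n) K))
    (t : ℕ) : Set (Ideal (MvPolynomial (Fin n) K)) :=
  associatedPrimes (MvPolynomial (Fin n) K) (MvPolynomial (Fin n) K ⧸ I ^ t)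

/-- `p ∈ Ass^∞(I)`: `p` is an associated prime of all large powers of `I`. -/
def memAssInfty (K : Type*) [Field K] {n : ℕ} (I p : Ideal (MvPolynomial (Fin n) K)) : Prop :=
  ∃ l, ∀ t, l ≤ t → p ∈ AssPow K I t

/-- `depth (R/I^t)`: the maximal length of a regular sequence on `R/I^t` consisting of
elements of the maximal ideal. -/
noncomputable def qDepth (K : Type*) [Field K] {n : ℕ} (I : Ideal (MvPolynomial (Fin n) K))
    (t : ℕ) : ℕ :=
  sSup {k | ∃ rs : List (MvPolynomial (Fin n) K), rs.length = k ∧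
    (∀ r ∈ rs, r ∈ maxIdeal K n) ∧
    RingTheory.Sequence.IsRegular (MvPolynomial (Fin n) K ⧸ I ^ t) rs}

/-- The linear relation graph `Γ_I` of the square-free monomial ideal with generator
supports `B`: `{i,j}` is an edge iff `x_i u = x_j v` for some generators `u, v`. -/
noncomputable def linRelGraph (K : Type*) [Field K] {n : ℕ}
    (B : Finset (Finset (Fin n))) : SimpleGraph (Fin n) where
  Adj i j := i ≠ j ∧ ∃ S ∈ B, ∃ T ∈ B, X i * sqMon K S = X j * sqMon K T
  symm := by
    refine ⟨?_⟩
    rintro i j ⟨hij, S, hS, T, hT, h⟩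
    exact ⟨hij.symm, T, hT, S, hS, h.symm⟩
  loopless := by refine ⟨?_⟩; rintro i ⟨h, -⟩; exact h rfl


open scoped Classical in
lemma stmt7_aux (K : Type*) [Field K] {n d : ℕ} {B : Finset (Finset (Fin n))}
    (hmat : IsMatroidalBases d B) (c : (linRelGraph K B).ConnectedComponent) :
    ∀ k (S : Finset (Fin n)), S ∈ B → ∀ T ∈ B, (S \ T).card = k →
      (S.filter fun i => (linRelGraph K B).connectedComponentMk i = c).card =
      (T.filter fun i => (linRelGraph K B).connectedComponentMk i = c).card := by
  intro k
  induction k using Nat.strong_induction_on with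
  | _ k ih =>
    intro S hS T hT hcard
    rcases Nat.eq_zero_or_pos k with hk | hk
    · have hsub : S ⊆ T := by
        rw [hk] at hcard
        simpa [Finset.sdiff_eq_empty_iff_subset] using Finset.card_eq_zero.mp hcard
      rw [Finset.eq_of_subset_of_card_le hsub
        (by rw [hmat.2.1 S hS, hmat.2.1 T hT])]
    · obtain ⟨i, hi⟩ : (S \ T).Nonempty := by
        rw [← Finset.card_pos, hcard]; exact hk
      have hiST := Finset.mem_sdiff.mp hi
      obtain ⟨j, hjT, hjS, hS'⟩ := hmat.2.2 S hS T hT i hiST.1 hiST.2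
      have hjSe : j ∉ S.erase i := fun h => hjS (Finset.mem_of_mem_erase h)
      have hXeq : X i * sqMon K (insert j (S.erase i)) = X j * sqMon K S := by
        rw [sqMon, sqMon, Finset.prod_insert hjSe, ← Finset.mul_prod_erase S X hiST.1]
        ring
      have hadj : (linRelGraph K B).Adj i j :=
        ⟨fun h => hjS (h ▸ hiST.1), insert j (S.erase i), hS', S, hS, hXeq⟩
      have hcc : (linRelGraph K B).connectedComponentMk i =
          (linRelGraph K B).connectedComponentMk j :=
        SimpleGraph.ConnectedComponent.sound hadj.reachable
      have hfc : ((insert j (S.erase i)).filter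
            (fun x => (linRelGraph K B).connectedComponentMk x = c)).card =
          (S.filter fun x => (linRelGraph K B).connectedComponentMk x = c).card := by
        by_cases hPi : (linRelGraph K B).connectedComponentMk i = c
        · have hPj : (linRelGraph K B).connectedComponentMk j = c := hcc.symm.trans hPi
          have hiF : i ∈ S.filter
              (fun x => (linRelGraph K B).connectedComponentMk x = c) :=
            Finset.mem_filter.mpr ⟨hiST.1, hPi⟩
          have hjF : j ∉ (S.filter
              (fun x => (linRelGraph K B).connectedComponentMk x = c)).erase i :=
            fun h => hjS (Finset.mem_filter.mp (Finset.mem_of_mem_erase h)).1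
          rw [Finset.filter_insert, if_pos hPj, Finset.filter_erase,
            Finset.card_insert_of_notMem hjF, Finset.card_erase_of_mem hiF,
            Nat.sub_add_cancel (Finset.card_pos.mpr ⟨i, hiF⟩)]
        · have hPj : ¬ (linRelGraph K B).connectedComponentMk j = c :=
            fun h => hPi (hcc.trans h)
          rw [Finset.filter_insert, if_neg hPj, Finset.filter_erase]
          exact congrArg Finset.card
            (Finset.erase_eq_of_notMem (fun h => hPi (Finset.mem_filter.mp h).2))
      have hlt : ((insert j (S.erase i)) \ T).card < k := by
        have hsub : (insert j (S.erase i)) \ T ⊆ (S \ T).erase i := by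
          intro x hx
          simp only [Finset.mem_sdiff, Finset.mem_insert, Finset.mem_erase] at hx ⊢
          rcases hx.1 with h | h
          · exact absurd (h ▸ hjT) hx.2
          · exact ⟨h.1, h.2, hx.2⟩
        calc ((insert j (S.erase i)) \ T).card ≤ ((S \ T).erase i).card :=
              Finset.card_le_card hsub
          _ = (S \ T).card - 1 := Finset.card_erase_of_mem hi
          _ < k := by omega
      calc (S.filter fun x => (linRelGraph K B).connectedComponentMk x = c).card
          = ((insert j (S.erase i)).filter
              (fun x => (linRelGraph K B).connectedComponentMk x = c)).card := hfc.symm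
        _ = (T.filter fun x => (linRelGraph K B).connectedComponentMk x = c).card :=
            ih _ hlt _ hS' T hT rfl

/-- if `I` is a matroidal ideal of degree `d` with full support, `gcd(I) = 1`
and `m ∉ Ass^∞(I)`, then there are degrees `d_c` attached to the connected components `c`
of the linear relation graph `Γ_I`, summing to `d`, such that `I` is contained in each
square-free Veronese-type ideal of degree `d_c` in the variables of the component `c`. -/
theorem stmt7 (K : Type*) [Field K] (n d : ℕ) (B : Finset (Finset (Fin n)))
    (hmat : IsMatroidalBases d B) (I : Ideal (MvPolynomial (Fin n) K))
    (hI : I = matIdeal K B)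
    (hsupp : ∀ i : Fin n, ∃ S ∈ B, i ∈ S)
    (hgcd : ∀ i : Fin n, ∃ S ∈ B, i ∉ S)
    (hm : ¬ memAssInfty K I (maxIdeal K n)) :
    ∃ dd : (linRelGraph K B).ConnectedComponent → ℕ,
      (∑ᶠ c, dd c) = d ∧
      ∀ c : (linRelGraph K B).ConnectedComponent,
        I ≤ Ideal.span (sqMon K ''
          {S : Finset (Fin n) | S.card = dd c ∧
            ∀ i ∈ S, (linRelGraph K B).connectedComponentMk i = c}) := by
  classical
  obtain ⟨S₀, hS₀⟩ := hmat.1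
  haveI : Fintype (linRelGraph K B).ConnectedComponent := Fintype.ofFinite _
  refine ⟨fun c => (S₀.filter fun i =>
      (linRelGraph K B).connectedComponentMk i = c).card, ?_, ?_⟩
  · rw [finsum_eq_sum_of_fintype]
    exact (Finset.card_eq_sum_card_fiberwise
      (f := fun i => (linRelGraph K B).connectedComponentMk i)
      (fun x _ => Finset.mem_univ _)).symm.trans (hmat.2.1 S₀ hS₀)
  · intro c
    rw [hI, matIdeal]
    apply Ideal.span_le.mpr
    rintro _ ⟨T, hT, rfl⟩
    rw [Finset.mem_coe] at hT
    have hsplit : sqMon K T =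
        sqMon K (T.filter fun x => (linRelGraph K B).connectedComponentMk x = c) *
        sqMon K (T.filter fun x => ¬ (linRelGraph K B).connectedComponentMk x = c) := by
      rw [sqMon, sqMon, sqMon]
      exact (Finset.prod_filter_mul_prod_filter_not T _ X).symm
    rw [hsplit]
    exact Ideal.mul_mem_right _ _ (Ideal.subset_span
      ⟨T.filter fun x => (linRelGraph K B).connectedComponentMk x = c,
        ⟨stmt7_aux K hmat c _ T hT S₀ hS₀ rfl,
         fun i hi => (Finset.mem_filter.mp hi).2⟩, rfl⟩)
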